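/- Let λ be a nonzero real number. For all real numbers a, b, the ℝ-linear map P on H_ss determined on the basis by P(1) = 0, P(e₁) = a e₂ + b e₃, P(e₂) = −λ e₂, P(e₃) = −λ e₃ is a Rota-Baxter operator of weight λ on H_ss. -/

import Mathlib

noncomputable section

/-- The split semi-quaternion algebra `H_ss`, realized as the quaternion algebra over `ℝ`
with `e₁² = 1`, `e₂² = 0` (so that `e₃ = e₁e₂` satisfies `e₃² = 0`,
`e₁e₂ = e₃ = -e₂e₁`, `e₂e₃ = 0 = e₃e₂`, `e₃e₁ = -e₂ = -e₁e₃`). -/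
abbrev Hss : Type := QuaternionAlgebra ℝ 1 0 0

/-- The basis element `e₁`. -/
def e1 : Hss := ⟨0, 1, 0, 0⟩

/-- The basis element `e₂`. -/
def e2 : Hss := ⟨0, 0, 1, 0⟩

/-- The basis element `e₃`. -/
def e3 : Hss := ⟨0, 0, 0, 1⟩

/-- `P` is a Rota-Baxter operator of weight `l` on `H_ss`. -/
def IsRotaBaxter (l : ℝ) (P : Hss →ₗ[ℝ] Hss) : Prop :=
  ∀ x y : Hss, P x * P y = P (P x * y) + P (x * P y) + l • P (x * y)

lemma decomp (x : Hss) : x = x.re • (1:Hss) + x.imI • e1 + x.imJ • e2 + x.imK • e3 := by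
  ext <;> simp [e1, e2, e3]

theorem rb_nonzero_weight_family2 (l : ℝ) (hl : l ≠ 0) (a b : ℝ)
    (P : Hss →ₗ[ℝ] Hss)
    (h0 : P 1 = 0)
    (h1 : P e1 = (a) • e2 + (b) • e3)
    (h2 : P e2 = (-l) • e2)
    (h3 : P e3 = (-l) • e3) :
    IsRotaBaxter l P := by
  have hP : ∀ x : Hss, P x = (a * x.imI - l * x.imJ) • e2 + (b * x.imI - l * x.imK) • e3 := by
    intro x
    calc P x = P (x.re • (1:Hss) + x.imI • e1 + x.imJ • e2 + x.imK • e3) := by rw [← decomp]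
    _ = x.re • P 1 + x.imI • P e1 + x.imJ • P e2 + x.imK • P e3 := by
        simp [map_add, map_smul]
    _ = _ := by
        rw [h0, h1, h2, h3]
        ext <;> simp [e2, e3] <;> ring
  intro x y
  rw [hP x, hP y, hP (_ * _), hP (_ * _), hP (_ * _)]
  ext <;> simp [e2, e3, QuaternionAlgebra.re_mul, QuaternionAlgebra.imI_mul,
    QuaternionAlgebra.imJ_mul, QuaternionAlgebra.imK_mul] <;> ring
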